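/- (Self-consistency of the last-layer error) Combining $\gamma_{L-1}e_{L-1}^* = \gamma_L W_L^\top e_L^*$ and the telescoping $v_{L-1}^* - W_{L-1:1}x = \sum_{l=1}^{L-1} W_{L-1:l+1} e_l^*$ (with $W_{L-1:L} = I$), one obtains $v_{L-1}^* - W_{L-1:1}x = \gamma_L\left(\sum_{i=2}^{L}\frac{1}{\gamma_{i-1}} W_{L-1:i}W_{L:i}^\top\right) e_L^*$, and hence $(I + C_\gamma)e_L^* = y - W_{L:1}x$, where $C_\gamma = \sum_{i=2}^L \frac{\gamma_L}{\gamma_{i-1}}W_{L:i}W_{L:i}^\top$. -/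

import Mathlib

open Matrix Finset
noncomputable def Wch {d : ℕ} (W : ℕ → Matrix (Fin d) (Fin d) ℝ) (i j : ℕ) :
    Matrix (Fin d) (Fin d) ℝ :=
  ((List.range (j + 1 - i)).map fun k => W (j - k)).prod

lemma Wch_of_gt {d : ℕ} (W : ℕ → Matrix (Fin d) (Fin d) ℝ) {i j : ℕ} (h : j + 1 ≤ i) :
    Wch W i j = 1 := by
  unfold Wch; rw [Nat.sub_eq_zero_of_le h]; simp

lemma Wch_succ {d : ℕ} (W : ℕ → Matrix (Fin d) (Fin d) ℝ) {i j : ℕ} (h : i ≤ j + 1) :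
    Wch W i (j + 1) = W (j + 1) * Wch W i j := by
  unfold Wch
  rw [show j + 1 + 1 - i = (j + 1 - i) + 1 by omega, List.range_succ_eq_map]
  simp only [List.map_cons, List.map_map, List.prod_cons, Nat.sub_zero]
  have hf : ((fun k => W (j + 1 - k)) ∘ Nat.succ) = fun k => W (j - k) := by
    funext k
    simp only [Function.comp_apply, Nat.succ_sub_succ_eq_sub]
  rw [hf]

lemma Wch_succ_left {d : ℕ} (W : ℕ → Matrix (Fin d) (Fin d) ℝ) {i j : ℕ} (h : i ≤ j) :
    Wch W i j = Wch W (i + 1) j * W i := by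
  unfold Wch
  rw [show j + 1 - i = (j + 1 - (i + 1)) + 1 by omega, List.range_succ]
  rw [List.map_append, List.prod_append]
  simp only [List.map_cons, List.map_nil, List.prod_cons, List.prod_nil, mul_one]
  have : j - (j + 1 - (i + 1)) = i := by omega
  rw [this]

lemma sum_mulVec' {d : ℕ} {ι : Type*} (s : Finset ι) (M : ι → Matrix (Fin d) (Fin d) ℝ)
    (x : Fin d → ℝ) : (∑ i ∈ s, M i) *ᵥ x = ∑ i ∈ s, M i *ᵥ x := by
  induction s using Finset.cons_induction with
  | empty => simp [Matrix.zero_mulVec]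
  | cons a s ha ih => simp [Finset.sum_cons, Matrix.add_mulVec, ih]

lemma mulVec_sum' {d : ℕ} {ι : Type*} (s : Finset ι) (A : Matrix (Fin d) (Fin d) ℝ)
    (f : ι → Fin d → ℝ) : A *ᵥ (∑ i ∈ s, f i) = ∑ i ∈ s, A *ᵥ f i := by
  induction s using Finset.cons_induction with
  | empty => simp
  | cons a s ha ih => simp [Finset.sum_cons, Matrix.mulVec_add, ih]

set_option maxHeartbeats 1600000 in
/-- **Self-consistency of the last-layer error.** Combining the critical-point relations
`γ_l e_l = γ_{l+1} W_{l+1}ᵀ e_{l+1}` with the telescoping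
`v_{L-1} - W_{L-1:1} x = ∑_{l=1}^{L-1} W_{L-1:l+1} e_l`, one obtains
`v_{L-1} - W_{L-1:1} x = γ_L (∑_{i=2}^{L} (1/γ_{i-1}) W_{L-1:i} W_{L:i}ᵀ) e_L`, and hence
`(I + C_γ) e_L = y - W_{L:1} x`. -/
theorem pc_last_layer_self_consistency (d L : ℕ) (hL : 2 ≤ L)
    (W : ℕ → Matrix (Fin d) (Fin d) ℝ) (γ : ℕ → ℝ) (hγ : ∀ l, 1 ≤ l → l ≤ L → 0 < γ l)
    (x y : Fin d → ℝ) (v : ℕ → Fin d → ℝ) (hv0 : v 0 = x)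
    (e : ℕ → Fin d → ℝ)
    (he : ∀ l, 1 ≤ l → l ≤ L - 1 → e l = v l - W l *ᵥ v (l - 1))
    (heL : e L = y - W L *ᵥ v (L - 1))
    (hcrit : ∀ l, 1 ≤ l → l ≤ L - 1 →
      γ l • e l = γ (l + 1) • ((W (l + 1))ᵀ *ᵥ e (l + 1)))
    (C : Matrix (Fin d) (Fin d) ℝ)
    (hC : C = ∑ i ∈ Finset.Icc 2 L, (γ L / γ (i - 1)) • (Wch W i L * (Wch W i L)ᵀ)) :
    v (L - 1) - Wch W 1 (L - 1) *ᵥ x =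
      ∑ l ∈ Finset.Icc 1 (L - 1), Wch W (l + 1) (L - 1) *ᵥ e l ∧
    v (L - 1) - Wch W 1 (L - 1) *ᵥ x =
      γ L • ((∑ i ∈ Finset.Icc 2 L, (1 / γ (i - 1)) • (Wch W i (L - 1) * (Wch W i L)ᵀ))
        *ᵥ e L) ∧
    ((1 : Matrix (Fin d) (Fin d) ℝ) + C) *ᵥ e L = y - Wch W 1 L *ᵥ x := by
  obtain ⟨M, rfl⟩ : ∃ M, L = M + 2 := ⟨L - 2, by omega⟩
  have hsub : M + 2 - 1 = M + 1 := rfl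
  simp only [hsub] at he heL hcrit ⊢
  -- telescoping
  have tel : ∀ m, 1 ≤ m → m ≤ M + 1 →
      v m - Wch W 1 m *ᵥ x = ∑ l ∈ Finset.Icc 1 m, Wch W (l + 1) m *ᵥ e l := by
    intro m hm
    induction m, hm using Nat.le_induction with
    | base =>
      intro _
      have h1 := he 1 le_rfl (by omega)
      have w11 : Wch W 1 1 = W 1 := by
        rw [show (1:ℕ) = 0 + 1 from rfl, Wch_succ W (i := 1) (j := 0) (by omega),
          Wch_of_gt W (i := 1) (j := 0) (by omega), mul_one]
      rw [w11, Finset.Icc_self, Finset.sum_singleton,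
        Wch_of_gt W (i := 2) (j := 1) (by omega), Matrix.one_mulVec, h1, hv0]
    | succ m hm ih =>
      intro hm1
      have ihe := ih (by omega)
      have h1 := he (m + 1) (by omega) (by omega)
      rw [Finset.sum_Icc_succ_top (by omega : 1 ≤ m + 1),
        Wch_of_gt W (i := m + 1 + 1) (j := m + 1) le_rfl, Matrix.one_mulVec]
      have hcong : ∀ l ∈ Finset.Icc 1 m, Wch W (l + 1) (m + 1) *ᵥ e l
          = W (m + 1) *ᵥ (Wch W (l + 1) m *ᵥ e l) := by
        intro l hl
        simp only [Finset.mem_Icc] at hl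
        rw [Wch_succ W (i := l + 1) (j := m) (by omega), Matrix.mulVec_mulVec]
      rw [Finset.sum_congr rfl hcong, ← mulVec_sum', ← ihe,
        Wch_succ W (i := 1) (j := m) (by omega), h1]
      simp only [Nat.add_sub_cancel]
      rw [Matrix.mulVec_sub, ← Matrix.mulVec_mulVec]
      abel
  -- error propagation
  have err : ∀ k l, 1 ≤ l → l ≤ M + 1 → M + 1 - l = k →
      e l = (γ (M + 2) / γ l) • ((Wch W (l + 1) (M + 2))ᵀ *ᵥ e (M + 2)) := by
    intro k
    induction k with
    | zero =>
      intro l hl1 hl2 hk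
      have hlL : l = M + 1 := by omega
      subst hlL
      have h := hcrit (M + 1) (by omega) le_rfl
      have hg := hγ (M + 1) (by omega) (by omega)
      have wLL : Wch W (M + 2) (M + 2) = W (M + 2) := by
        rw [show M + 2 = (M + 1) + 1 from rfl,
          Wch_succ W (i := M + 2) (j := M + 1) le_rfl,
          Wch_of_gt W (i := M + 2) (j := M + 1) le_rfl, mul_one]
      have h2 := congrArg (fun u => (γ (M + 1))⁻¹ • u) h
      simp only [smul_smul, inv_mul_cancel₀ (ne_of_gt hg), one_smul] at h2
      rw [h2, wLL]
      congr 1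
      rw [div_eq_inv_mul]
    | succ k ih =>
      intro l hl1 hl2 hk
      have hih := ih (l + 1) (by omega) (by omega) (by omega)
      have h := hcrit l hl1 (by omega)
      have hg := hγ l hl1 (by omega)
      have hg1 := hγ (l + 1) (by omega) (by omega)
      rw [hih, Matrix.mulVec_smul, smul_smul] at h
      have h2 := congrArg (fun u => (γ l)⁻¹ • u) h
      simp only [smul_smul, inv_mul_cancel₀ (ne_of_gt hg), one_smul] at h2
      rw [h2, Matrix.mulVec_mulVec,
        Wch_succ_left W (i := l + 1) (j := M + 2) (by omega), Matrix.transpose_mul]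
      congr 1
      field_simp
  -- part 1
  have part1 := tel (M + 1) (by omega) le_rfl
  -- part 2
  have part2 : v (M + 1) - Wch W 1 (M + 1) *ᵥ x =
      γ (M + 2) • ((∑ i ∈ Finset.Icc 2 (M + 2),
        (1 / γ (i - 1)) • (Wch W i (M + 1) * (Wch W i (M + 2))ᵀ)) *ᵥ e (M + 2)) := by
    rw [part1, sum_mulVec', Finset.smul_sum]
    rw [show Finset.Icc 2 (M + 2) = (Finset.Icc 1 (M + 1)).map (addRightEmbedding 1) by
      rw [Finset.map_add_right_Icc]]
    rw [Finset.sum_map]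
    refine Finset.sum_congr rfl ?_
    intro l hl
    simp only [Finset.mem_Icc] at hl
    simp only [addRightEmbedding_apply, Nat.add_sub_cancel]
    rw [err (M + 1 - l) l hl.1 hl.2 rfl, Matrix.mulVec_smul, Matrix.mulVec_mulVec,
      Matrix.smul_mulVec, smul_smul]
    congr 1
    rw [mul_one_div]
  refine ⟨part1, part2, ?_⟩
  -- part 3
  have hv : v (M + 1) = Wch W 1 (M + 1) *ᵥ x + γ (M + 2) • ((∑ i ∈ Finset.Icc 2 (M + 2),
      (1 / γ (i - 1)) • (Wch W i (M + 1) * (Wch W i (M + 2))ᵀ)) *ᵥ e (M + 2)) := by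
    rw [← part2]; abel
  have hCeq : C = γ (M + 2) • (W (M + 2) * ∑ i ∈ Finset.Icc 2 (M + 2),
      (1 / γ (i - 1)) • (Wch W i (M + 1) * (Wch W i (M + 2))ᵀ)) := by
    rw [hC, Finset.mul_sum, Finset.smul_sum]
    refine Finset.sum_congr rfl ?_
    intro i hi
    simp only [Finset.mem_Icc] at hi
    rw [mul_smul_comm, smul_smul, ← mul_assoc,
      ← Wch_succ W (i := i) (j := M + 1) (by omega)]
    congr 1
    rw [mul_one_div]
  set S := ∑ i ∈ Finset.Icc 2 (M + 2),
      (1 / γ (i - 1)) • (Wch W i (M + 1) * (Wch W i (M + 2))ᵀ) with hS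
  have key : e (M + 2) = y - Wch W 1 (M + 2) *ᵥ x
      - γ (M + 2) • ((W (M + 2) * S) *ᵥ e (M + 2)) := by
    conv_lhs => rw [heL, hv]
    rw [Matrix.mulVec_add, Matrix.mulVec_mulVec, Matrix.mulVec_smul,
      Matrix.mulVec_mulVec, ← Wch_succ W (i := 1) (j := M + 1) (by omega),
      show M + 1 + 1 = M + 2 from rfl, sub_add_eq_sub_sub]
  rw [Matrix.add_mulVec, Matrix.one_mulVec, hCeq, Matrix.smul_mulVec]
  nth_rewrite 1 [key]
  abel
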